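/- arXiv:1312.1230 — 2 statements merged into one kernel-verified Lean document; each statement's English description precedes it below -/
import Mathlib

section
/- Define f_ε(x) = n^{−2} e^{n/q} (constant in x ∈ R) when ε ∈ [1/n − e^{−n}, 1/n + e^{−n}] for some integer n ≥ 4, and f_ε(x) = 0 otherwise. Then for every q' ≤ q there exists s ∈ R with ∫₀¹ ε^{q's} |f_ε(0)|^{q'} dε/ε < ∞, but for every q' > q and every s ∈ R, ∫₀¹ ε^{q's} |f_ε(0)|^{q'} dε/ε = ∞. -/
open MeasureTheory Set Real

namespace ModerateAux6

noncomputable def J (n : ℕ) : Set ℝ :=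
  Set.Icc ((n : ℝ)⁻¹ - Real.exp (-(n : ℝ))) ((n : ℝ)⁻¹ + Real.exp (-(n : ℝ)))

lemma exp_lower {n : ℕ} (hn : 4 ≤ n) : 2 * (n : ℝ) * ((n : ℝ) + 1) ≤ Real.exp (n : ℝ) := by
  induction n, hn using Nat.le_induction with
  | base =>
      have h2 : (2.7182818283 : ℝ) < Real.exp 1 := Real.exp_one_gt_d9
      have h4 : Real.exp ((4 : ℕ) : ℝ) = Real.exp 1 * Real.exp 1 * Real.exp 1 * Real.exp 1 := by
        rw [← Real.exp_add, ← Real.exp_add, ← Real.exp_add]; norm_num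
      rw [h4]
      push_cast
      have he2 : (7.389 : ℝ) < Real.exp 1 * Real.exp 1 := by nlinarith
      nlinarith [Real.exp_pos 1]
  | succ n hn ih =>
      have h1 : Real.exp (((n : ℕ) : ℝ) + 1) = Real.exp n * Real.exp 1 := by
        rw [← Real.exp_add]
      have h2 : (2.7182818283 : ℝ) < Real.exp 1 := Real.exp_one_gt_d9
      have hn' : (4 : ℝ) ≤ (n : ℝ) := by exact_mod_cast hn
      push_cast
      rw [h1]
      nlinarith [Real.exp_pos (n : ℝ)]

lemma exp_neg_le {n : ℕ} (hn : 4 ≤ n) :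
    Real.exp (-(n : ℝ)) ≤ 1 / (2 * (n : ℝ) * ((n : ℝ) + 1)) := by
  have hn' : (4 : ℝ) ≤ (n : ℝ) := by exact_mod_cast hn
  rw [Real.exp_neg, ← one_div]
  exact one_div_le_one_div_of_le (by nlinarith) (exp_lower hn)

lemma J_subset {n : ℕ} (hn : 4 ≤ n) : J n ⊆ Set.Icc ((2 * (n : ℝ))⁻¹) 1 := by
  have hn' : (4 : ℝ) ≤ (n : ℝ) := by exact_mod_cast hn
  have ha := exp_neg_le hn
  have hapos := Real.exp_pos (-(n : ℝ))
  have h1 : 1 / (2 * (n : ℝ) * ((n : ℝ) + 1)) ≤ 1 / (2 * (n : ℝ)) := by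
    apply one_div_le_one_div_of_le (by nlinarith); nlinarith
  have h2 : 1 / (2 * (n : ℝ) * ((n : ℝ) + 1)) ≤ 1 / 40 := by
    apply one_div_le_one_div_of_le (by norm_num); nlinarith
  have h3 : (n : ℝ)⁻¹ ≤ 1 / 4 := by
    rw [inv_eq_one_div]; exact one_div_le_one_div_of_le (by norm_num) hn'
  have h4 : (n : ℝ)⁻¹ - 1 / (2 * (n : ℝ)) = (2 * (n : ℝ))⁻¹ := by
    rw [inv_eq_one_div, inv_eq_one_div]
    field_simp
    norm_num
  intro x hx
  obtain ⟨hx1, hx2⟩ := hx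
  constructor
  · have : (2 * (n : ℝ))⁻¹ ≤ (n : ℝ)⁻¹ - Real.exp (-(n : ℝ)) := by
      rw [← h4]; linarith
    linarith
  · linarith

lemma J_pos {n : ℕ} (hn : 4 ≤ n) : (0 : ℝ) < (2 * (n : ℝ))⁻¹ := by
  have hn' : (4 : ℝ) ≤ (n : ℝ) := by exact_mod_cast hn
  positivity

lemma J_subset_Ioc {n : ℕ} (hn : 4 ≤ n) : J n ⊆ Set.Ioc (0 : ℝ) 1 := fun x hx =>
  ⟨lt_of_lt_of_le (J_pos hn) (J_subset hn hx).1, (J_subset hn hx).2⟩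

lemma step {n : ℕ} (hn : 4 ≤ n) :
    ((n : ℝ) + 1)⁻¹ + Real.exp (-((n : ℝ) + 1)) < (n : ℝ)⁻¹ - Real.exp (-(n : ℝ)) := by
  have hn' : (4 : ℝ) ≤ (n : ℝ) := by exact_mod_cast hn
  have ha := exp_neg_le hn
  have hb : Real.exp (-((n : ℝ) + 1)) < Real.exp (-(n : ℝ)) := by
    apply Real.exp_lt_exp.mpr; linarith
  have hdiff : (n : ℝ)⁻¹ - ((n : ℝ) + 1)⁻¹ = 1 / ((n : ℝ) * ((n : ℝ) + 1)) := by
    rw [inv_eq_one_div, inv_eq_one_div]; field_simp; ring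
  have h5 : 2 * (1 / (2 * (n : ℝ) * ((n : ℝ) + 1))) = 1 / ((n : ℝ) * ((n : ℝ) + 1)) := by
    field_simp
  linarith

lemma not_mem_of_lt {n m : ℕ} (hn : 4 ≤ n) (hnm : n < m) {x : ℝ} (hx : x ∈ J n) : x ∉ J m := by
  intro hxm
  have hm1 : (n : ℝ) + 1 ≤ (m : ℝ) := by exact_mod_cast hnm
  have hn' : (4 : ℝ) ≤ (n : ℝ) := by exact_mod_cast hn
  have h1 : (m : ℝ)⁻¹ ≤ ((n : ℝ) + 1)⁻¹ := by
    apply inv_anti₀ (by linarith) hm1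
  have h2 : Real.exp (-(m : ℝ)) ≤ Real.exp (-((n : ℝ) + 1)) := by
    apply Real.exp_le_exp.mpr; linarith
  have hs := step hn
  have := hx.1
  have := hxm.2
  linarith

lemma not_mem {n m : ℕ} (hn : 4 ≤ n) (hm : 4 ≤ m) (hnm : n ≠ m) {x : ℝ} (hx : x ∈ J n) :
    x ∉ J m := by
  rcases lt_or_gt_of_ne hnm with h | h
  · exact not_mem_of_lt hn h hx
  · intro hxm; exact not_mem_of_lt hm h hxm hx

lemma volume_J (n : ℕ) : (volume (J n)).toReal = 2 * Real.exp (-(n : ℝ)) := by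
  have h : ((n : ℝ)⁻¹ + Real.exp (-(n : ℝ))) - ((n : ℝ)⁻¹ - Real.exp (-(n : ℝ)))
      = 2 * Real.exp (-(n : ℝ)) := by ring
  rw [J, Real.volume_Icc, h, ENNReal.toReal_ofReal (by positivity)]

end ModerateAux6

/-- For the net `f_ε = n^{−2} e^{n/q}` on the intervals
`[1/n − e^{−n}, 1/n + e^{−n}]` (`n ≥ 4`) and `0` elsewhere: for every
`q' ∈ [1, q]` there is `s` with `∫₀¹ ε^{q's} |f_ε|^{q'} dε/ε < ∞`, while for
every `q' > q` and every `s` this integral is infinite. -/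
theorem moderate_class_strict_inclusion_example
    (q : ℝ) (hq : 1 ≤ q)
    (f : ℝ → ℝ)
    (hf_on : ∀ n : ℕ, 4 ≤ n →
      ∀ ε ∈ Set.Icc ((n : ℝ)⁻¹ - Real.exp (-(n : ℝ))) ((n : ℝ)⁻¹ + Real.exp (-(n : ℝ))),
        f ε = ((n : ℝ) ^ 2)⁻¹ * Real.exp ((n : ℝ) / q))
    (hf_off : ∀ ε : ℝ,
      (∀ n : ℕ, 4 ≤ n →
        ε ∉ Set.Icc ((n : ℝ)⁻¹ - Real.exp (-(n : ℝ))) ((n : ℝ)⁻¹ + Real.exp (-(n : ℝ)))) →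
      f ε = 0) :
    (∀ q' : ℝ, 1 ≤ q' → q' ≤ q → ∃ s : ℝ,
      IntegrableOn (fun ε : ℝ => ε ^ (q' * s) * |f ε| ^ q' / ε) (Set.Ioc (0 : ℝ) 1)) ∧
    (∀ q' : ℝ, q < q' → ∀ s : ℝ,
      ¬ IntegrableOn (fun ε : ℝ => ε ^ (q' * s) * |f ε| ^ q' / ε) (Set.Ioc (0 : ℝ) 1)) := by
  have hq0 : (0 : ℝ) < q := by linarith
  have hf_on' : ∀ n : ℕ, 4 ≤ n → ∀ ε ∈ ModerateAux6.J n,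
      f ε = ((n : ℝ) ^ 2)⁻¹ * Real.exp ((n : ℝ) / q) := hf_on
  constructor
  · -- Part 1
    intro q' hq'1 hq'q
    have hq'0 : (0 : ℝ) < q' := by linarith
    refine ⟨1 / q', ?_⟩
    have hmeasJ : ∀ i : ℕ, MeasurableSet (ModerateAux6.J (i + 4)) := fun i => measurableSet_Icc
    set U : Set ℝ := ⋃ i : ℕ, ModerateAux6.J (i + 4) with hU
    have hmeasU : MeasurableSet U := MeasurableSet.iUnion fun i => hmeasJ i
    set c : ℕ → ℝ := fun n => ((n : ℝ) ^ 2)⁻¹ * Real.exp ((n : ℝ) / q) with hc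
    have hcpos : ∀ n : ℕ, 4 ≤ n → 0 < c n := by
      intro n hn
      have : (0 : ℝ) < (n : ℝ) := by exact_mod_cast (by omega : 0 < n)
      rw [hc]; positivity
    have habs : ∀ i : ℕ, ∀ x ∈ ModerateAux6.J (i + 4), |f x| ^ q' = |c (i + 4)| ^ q' := by
      intro i x hx
      rw [hf_on' (i + 4) (by omega) x hx]
    have hIi : ∀ i : ℕ, IntegrableOn (fun x => |f x| ^ q') (ModerateAux6.J (i + 4)) := by
      intro i
      have h1 : IntegrableOn (fun _ : ℝ => |c (i + 4)| ^ q') (ModerateAux6.J (i + 4)) :=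
        (integrableOn_const_iff).mpr (Or.inr measure_Icc_lt_top)
      exact h1.congr_fun (fun x hx => (habs i x hx).symm) (hmeasJ i)
    have hint_norm : ∀ i : ℕ, ∫ x in ModerateAux6.J (i + 4), ‖|f x| ^ q'‖
        = 2 * Real.exp (-(((i + 4 : ℕ)) : ℝ)) * (|c (i + 4)| ^ q') := by
      intro i
      rw [setIntegral_congr_fun (hmeasJ i) (g := fun _ : ℝ => |c (i + 4)| ^ q')
        (fun x hx => by
          rw [norm_of_nonneg (Real.rpow_nonneg (abs_nonneg _) _), habs i x hx])]
      rw [setIntegral_const, smul_eq_mul, measureReal_def, ModerateAux6.volume_J]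
    have hbound : ∀ i : ℕ, 2 * Real.exp (-(((i + 4 : ℕ)) : ℝ)) * (|c (i + 4)| ^ q')
        ≤ 2 * ((((i : ℝ) + 4)) ^ 2)⁻¹ := by
      intro i
      set n : ℕ := i + 4 with hn
      have hn4 : 4 ≤ n := by omega
      have hN : (0 : ℝ) < (n : ℝ) := by exact_mod_cast (by omega : 0 < n)
      have hN1 : (1 : ℝ) ≤ (n : ℝ) ^ 2 := by nlinarith [show (4:ℝ) ≤ (n:ℝ) by exact_mod_cast hn4]
      have habsc : |c n| = c n := abs_of_pos (hcpos n hn4)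
      rw [habsc, hc]
      rw [Real.mul_rpow (by positivity) (Real.exp_pos _).le, ← Real.exp_mul]
      have h1 : (((n : ℝ) ^ 2)⁻¹) ^ q' ≤ ((n : ℝ) ^ 2)⁻¹ := by
        have h := Real.rpow_le_rpow_of_exponent_ge (x := ((n : ℝ) ^ 2)⁻¹)
          (by positivity) (by rw [inv_le_one_iff₀]; right; exact hN1) hq'1
        rwa [Real.rpow_one] at h
      have h2 : Real.exp (-(n : ℝ)) * Real.exp ((n : ℝ) / q * q') ≤ 1 := by
        rw [← Real.exp_add]
        have harg : -(n : ℝ) + (n : ℝ) / q * q' ≤ 0 := by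
          have : (n : ℝ) / q * q' ≤ (n : ℝ) / q * q :=
            mul_le_mul_of_nonneg_left hq'q (by positivity)
          rw [div_mul_cancel₀ _ (ne_of_gt hq0)] at this
          linarith
        calc Real.exp (-(n : ℝ) + (n : ℝ) / q * q') ≤ Real.exp 0 := Real.exp_le_exp.mpr harg
          _ = 1 := Real.exp_zero
      have hrn : ((i : ℝ) + 4) ^ 2 = (n : ℝ) ^ 2 := by rw [hn]; push_cast; ring
      rw [hrn]
      have h3 : (0 : ℝ) ≤ (((n : ℝ) ^ 2)⁻¹) ^ q' := by positivity
      nlinarith [Real.exp_pos (-(n : ℝ)), Real.exp_pos ((n : ℝ) / q * q'),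
        mul_pos (Real.exp_pos (-(n : ℝ))) (Real.exp_pos ((n : ℝ) / q * q')),
        inv_nonneg.mpr (sq_nonneg (n : ℝ))]
    have hsumB : Summable (fun i : ℕ => 2 * ((((i : ℝ) + 4)) ^ 2)⁻¹) := by
      have h0 : Summable (fun n : ℕ => ((n : ℝ) ^ 2)⁻¹) := by
        simpa [one_div] using summable_one_div_nat_pow.mpr (by norm_num : 1 < 2)
      have h1 := (summable_nat_add_iff 4).mpr h0
      have h2 : (fun i : ℕ => ((((i : ℕ) + 4 : ℕ) : ℝ) ^ 2)⁻¹)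
          = fun i : ℕ => ((((i : ℝ) + 4)) ^ 2)⁻¹ := by
        funext i; push_cast; ring_nf
      rw [h2] at h1
      exact h1.mul_left 2
    have hsum : Summable (fun i : ℕ => ∫ x in ModerateAux6.J (i + 4), ‖|f x| ^ q'‖) := by
      apply Summable.of_nonneg_of_le
        (fun i => integral_nonneg fun x => norm_nonneg _)
        (fun i => by rw [hint_norm i]; exact hbound i) hsumB
    have hUint : IntegrableOn (fun x => |f x| ^ q') U :=
      integrableOn_iUnion_of_summable_integral_norm hIi hsum
    have hzero : IntegrableOn (fun x => |f x| ^ q') (Set.Ioc (0 : ℝ) 1 \ U) := by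
      have hz : IntegrableOn (fun _ : ℝ => (0 : ℝ)) (Set.Ioc (0 : ℝ) 1 \ U) := integrableOn_zero
      refine hz.congr_fun ?_ (measurableSet_Ioc.diff hmeasU)
      intro x hx
      have hfx : f x = 0 := hf_off x (fun n hn hmem =>
        hx.2 (Set.mem_iUnion.mpr ⟨n - 4, by rwa [Nat.sub_add_cancel hn]⟩))
      simp [hfx, Real.zero_rpow (ne_of_gt hq'0)]
    have hkey : IntegrableOn (fun x => |f x| ^ q') (Set.Ioc (0 : ℝ) 1) := by
      refine (hUint.union hzero).mono_set ?_
      intro x hx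
      by_cases h : x ∈ U
      · exact Or.inl h
      · exact Or.inr ⟨hx, h⟩
    refine hkey.congr_fun ?_ measurableSet_Ioc
    intro x hx
    have hx0 : x ≠ 0 := ne_of_gt hx.1
    have h1 : q' * (1 / q') = 1 := by field_simp
    show |f x| ^ q' = x ^ (q' * (1 / q')) * |f x| ^ q' / x
    rw [h1, Real.rpow_one, mul_comm, mul_div_assoc, div_self hx0, mul_one]
  · -- Part 2
    intro q' hqq' s hInt
    have hq'0 : (0 : ℝ) < q' := by linarith
    set g : ℝ → ℝ := fun ε => ε ^ (q' * s) * |f ε| ^ q' / ε with hg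
    set t : ℝ := q' * s - 1 with ht
    set p : ℝ := |t| + 2 * q' with hp
    have hδ : 0 < q' / q - 1 := by
      have := (one_lt_div hq0).mpr hqq'
      linarith
    set M : ℝ := ∫ ε in Set.Ioc (0 : ℝ) 1, g ε with hM
    have htend : Filter.Tendsto (fun x : ℝ => Real.exp ((q' / q - 1) * x) / x ^ p)
        Filter.atTop Filter.atTop := tendsto_exp_mul_div_rpow_atTop p _ hδ
    have hev := (htend.comp tendsto_natCast_atTop_atTop).eventually_ge_atTop
      ((|M| + 1) * (2 : ℝ) ^ |t|)
    obtain ⟨n, hnK, hn4⟩ := (hev.and (Filter.eventually_ge_atTop 4)).exists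
    simp only [Function.comp_apply] at hnK
    have hN : (0 : ℝ) < (n : ℝ) := by exact_mod_cast (by omega : 0 < n)
    have hN4 : (4 : ℝ) ≤ (n : ℝ) := by exact_mod_cast hn4
    have hJsub := ModerateAux6.J_subset_Ioc hn4
    set cn : ℝ := ((n : ℝ) ^ 2)⁻¹ * Real.exp ((n : ℝ) / q) with hcn
    have hcpos : 0 < cn := by rw [hcn]; positivity
    -- lower bound for g on J n
    have hCle : ∀ x ∈ ModerateAux6.J n, (2 * (n : ℝ)) ^ (-|t|) * cn ^ q' ≤ g x := by
      intro x hx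
      have hx' := ModerateAux6.J_subset hn4 hx
      have hxpos : 0 < x := lt_of_lt_of_le (ModerateAux6.J_pos hn4) hx'.1
      have hfx : f x = cn := hf_on' n hn4 x hx
      have hgx : g x = x ^ t * cn ^ q' := by
        show x ^ (q' * s) * |f x| ^ q' / x = x ^ t * cn ^ q'
        rw [hfx, abs_of_pos hcpos, ht, Real.rpow_sub hxpos, Real.rpow_one]
        field_simp
      rw [hgx]
      have hxt : (2 * (n : ℝ)) ^ (-|t|) ≤ x ^ t := by
        rcases le_or_gt 0 t with h | h
        · rw [abs_of_nonneg h, Real.rpow_neg (by positivity), ← Real.inv_rpow (by positivity)]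
          exact Real.rpow_le_rpow (by positivity) hx'.1 h
        · rw [abs_of_neg h, neg_neg]
          exact Real.rpow_le_rpow_of_nonpos hxpos (le_trans hx'.2 (by linarith)) h.le
      exact mul_le_mul_of_nonneg_right hxt (Real.rpow_nonneg hcpos.le _)
    have hIn : IntegrableOn g (ModerateAux6.J n) := hInt.mono_set hJsub
    have hvolne : volume (ModerateAux6.J n) ≠ ⊤ := by
      rw [ModerateAux6.J, Real.volume_Icc]; exact ENNReal.ofReal_ne_top
    have hlow := setIntegral_ge_of_const_le measurableSet_Icc hvolne hCle hIn
    have htoReal := ModerateAux6.volume_J n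
    simp only [ModerateAux6.J] at htoReal
    rw [measureReal_def, htoReal] at hlow
    have hlow' : (2 * (n : ℝ)) ^ (-|t|) * cn ^ q' * (2 * Real.exp (-(n : ℝ)))
        ≤ ∫ x in ModerateAux6.J n, g x := by
      simpa [ModerateAux6.J, mul_comm] using hlow
    have hgnn : 0 ≤ᵐ[volume.restrict (Set.Ioc (0 : ℝ) 1)] g := by
      refine (ae_restrict_iff' measurableSet_Ioc).mpr (Filter.Eventually.of_forall ?_)
      intro x hx
      exact div_nonneg (mul_nonneg (Real.rpow_nonneg hx.1.le _)
        (Real.rpow_nonneg (abs_nonneg _) _)) hx.1.le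
    have hup : ∫ x in ModerateAux6.J n, g x ≤ M :=
      setIntegral_mono_set hInt hgnn (HasSubset.Subset.eventuallyLE hJsub)
    -- algebraic identity
    have h2n : ((2 : ℝ) * (n : ℝ)) ^ (-|t|) = (2 : ℝ) ^ (-|t|) * (n : ℝ) ^ (-|t|) :=
      Real.mul_rpow (by norm_num) hN.le
    have hnsq : (((n : ℝ) ^ 2)⁻¹) ^ q' = (n : ℝ) ^ (-(2 * q') : ℝ) := by
      rw [← Real.rpow_two, ← Real.rpow_neg hN.le, ← Real.rpow_mul hN.le]
      norm_num
    have hnp : (n : ℝ) ^ (-|t|) * (n : ℝ) ^ (-(2 * q') : ℝ) = ((n : ℝ) ^ p)⁻¹ := by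
      rw [← Real.rpow_add hN, ← Real.rpow_neg hN.le, hp]
      congr 1
      ring
    have hexp2 : Real.exp (-(n : ℝ)) * Real.exp ((n : ℝ) / q * q')
        = Real.exp ((q' / q - 1) * (n : ℝ)) := by
      rw [← Real.exp_add]
      congr 1
      field_simp
      ring
    have hA : (2 * (n : ℝ)) ^ (-|t|) * cn ^ q' * (2 * Real.exp (-(n : ℝ)))
        = 2 * (2 : ℝ) ^ (-|t|) * (Real.exp ((q' / q - 1) * (n : ℝ)) / (n : ℝ) ^ p) := by
      calc (2 * (n : ℝ)) ^ (-|t|) * cn ^ q' * (2 * Real.exp (-(n : ℝ)))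
          = 2 * (2 : ℝ) ^ (-|t|) * (((n : ℝ) ^ (-|t|) * (n : ℝ) ^ (-(2 * q') : ℝ))
            * (Real.exp (-(n : ℝ)) * Real.exp ((n : ℝ) / q * q'))) := by
            rw [hcn, Real.mul_rpow (by positivity) (Real.exp_pos _).le, h2n, hnsq,
              ← Real.exp_mul]
            ring
        _ = 2 * (2 : ℝ) ^ (-|t|) * (((n : ℝ) ^ p)⁻¹
            * Real.exp ((q' / q - 1) * (n : ℝ))) := by rw [hnp, hexp2]
        _ = 2 * (2 : ℝ) ^ (-|t|) * (Real.exp ((q' / q - 1) * (n : ℝ)) / (n : ℝ) ^ p) := by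
            rw [div_eq_mul_inv]; ring
    -- contradiction
    have h2pos : (0 : ℝ) < (2 : ℝ) ^ (-|t|) := Real.rpow_pos_of_pos (by norm_num) _
    have h2id : (2 : ℝ) ^ (-|t|) * (2 : ℝ) ^ |t| = 1 := by
      rw [← Real.rpow_add (by norm_num)]
      norm_num
    have hchain : 2 * (|M| + 1) ≤ M := by
      have hstep : 2 * (2 : ℝ) ^ (-|t|) * ((|M| + 1) * (2 : ℝ) ^ |t|)
          ≤ 2 * (2 : ℝ) ^ (-|t|) * (Real.exp ((q' / q - 1) * (n : ℝ)) / (n : ℝ) ^ p) :=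
        mul_le_mul_of_nonneg_left hnK (by positivity)
      have heq : 2 * (2 : ℝ) ^ (-|t|) * ((|M| + 1) * (2 : ℝ) ^ |t|) = 2 * (|M| + 1) := by
        calc 2 * (2 : ℝ) ^ (-|t|) * ((|M| + 1) * (2 : ℝ) ^ |t|)
            = 2 * (|M| + 1) * ((2 : ℝ) ^ (-|t|) * (2 : ℝ) ^ |t|) := by ring
          _ = 2 * (|M| + 1) := by rw [h2id, mul_one]
      rw [heq] at hstep
      rw [← hA] at hstep
      calc 2 * (|M| + 1) ≤ (2 * (n : ℝ)) ^ (-|t|) * cn ^ q' * (2 * Real.exp (-(n : ℝ))) := hstep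
        _ ≤ ∫ x in ModerateAux6.J n, g x := by linarith [hlow]
        _ ≤ M := hup
    linarith [le_abs_self M, abs_nonneg M]
end

section
/- With f_ε as in the previous construction for a fixed q ∈ [1,∞) (f_ε = n^{−2} e^{n/q} on [1/n − e^{−n}, 1/n + e^{−n}], n ≥ 4, and 0 elsewhere), the squared net (f_ε²)_ε fails the L^q-moderateness condition: for every s ∈ R, ∫₀¹ ε^{qs} |f_ε(0)|^{2q} dε/ε = ∞. Hence the space of L^q-moderate nets is not closed under pointwise multiplication. -/
open MeasureTheory Set Real
open scoped ENNReal NNReal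

namespace ModerateAux

noncomputable def aa (n : ℕ) : ℝ := (n : ℝ)⁻¹ - Real.exp (-(n : ℝ))
noncomputable def bb (n : ℕ) : ℝ := (n : ℝ)⁻¹ + Real.exp (-(n : ℝ))
noncomputable def II (n : ℕ) : Set ℝ := Set.Icc (aa n) (bb n)
noncomputable def cc (q : ℝ) (n : ℕ) : ℝ := ((n : ℝ) ^ 2)⁻¹ * Real.exp ((n : ℝ) / q)
noncomputable def KK (q : ℝ) (m : ℕ) : ℝ := (((m : ℕ) : ℝ) ^ 2)⁻¹ ^ q * Real.exp (m : ℝ)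

lemma exp_big {n : ℕ} (hn : 4 ≤ n) : 2 * (n : ℝ) * ((n : ℝ) + 1) < Real.exp (n : ℝ) := by
  induction n, hn using Nat.le_induction with
  | base =>
      have h : Real.exp ((4 : ℕ) : ℝ) = Real.exp 1 ^ (4 : ℕ) := (Real.exp_one_pow 4).symm
      rw [h]
      have h2 : (2.7182818283 : ℝ) ^ (4:ℕ) ≤ Real.exp 1 ^ (4:ℕ) :=
        pow_le_pow_left₀ (by norm_num) Real.exp_one_gt_d9.le 4
      push_cast
      nlinarith [h2]
  | succ n hn ih =>
      have hn' : (4 : ℝ) ≤ (n : ℝ) := by exact_mod_cast hn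
      have h : Real.exp ((n : ℝ) + 1) = Real.exp (n : ℝ) * Real.exp 1 := by
        rw [← Real.exp_add]
      push_cast
      rw [h]
      nlinarith [Real.exp_one_gt_d9, Real.exp_pos (n : ℝ)]

lemma npos {n : ℕ} (hn : 4 ≤ n) : (0 : ℝ) < (n : ℝ) := by
  have : (4 : ℝ) ≤ (n : ℝ) := by exact_mod_cast hn
  linarith

lemma expneg_small {n : ℕ} (hn : 4 ≤ n) :
    Real.exp (-(n : ℝ)) < (2 * (n : ℝ) * ((n : ℝ) + 1))⁻¹ := by
  have h0 : (0 : ℝ) < 2 * (n : ℝ) * ((n : ℝ) + 1) := by nlinarith [npos hn]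
  rw [Real.exp_neg]
  exact inv_strictAnti₀ h0 (exp_big hn)

lemma aa_ge {n : ℕ} (hn : 4 ≤ n) : (2 * (n : ℝ))⁻¹ ≤ aa n := by
  have hp := npos hn
  have h1 := expneg_small hn
  have h2 : (2 * (n : ℝ) * ((n : ℝ) + 1))⁻¹ ≤ (2 * (n : ℝ) * 1)⁻¹ := by
    apply inv_anti₀ (by linarith) (by nlinarith)
  have h3 : (n : ℝ)⁻¹ = 2 * (2 * (n : ℝ))⁻¹ := by field_simp
  unfold aa
  rw [h3]
  have : Real.exp (-(n : ℝ)) ≤ (2 * (n : ℝ))⁻¹ := by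
    calc Real.exp (-(n : ℝ)) ≤ (2 * (n : ℝ) * ((n : ℝ) + 1))⁻¹ := h1.le
    _ ≤ (2 * (n : ℝ) * 1)⁻¹ := h2
    _ = (2 * (n : ℝ))⁻¹ := by norm_num
  linarith

lemma aa_pos {n : ℕ} (hn : 4 ≤ n) : 0 < aa n := by
  have := aa_ge hn
  have hp := npos hn
  have : (0:ℝ) < (2 * (n : ℝ))⁻¹ := by positivity
  linarith [aa_ge hn]

lemma bb_le_one {n : ℕ} (hn : 4 ≤ n) : bb n ≤ 1 := by
  have hp := npos hn
  have hn' : (4 : ℝ) ≤ (n : ℝ) := by exact_mod_cast hn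
  have h1 : (n : ℝ)⁻¹ ≤ 4⁻¹ := by
    apply inv_anti₀ (by norm_num) hn'
  have h2 := expneg_small hn
  have h3 : (2 * (n : ℝ) * ((n : ℝ) + 1))⁻¹ ≤ (40 : ℝ)⁻¹ := by
    apply inv_anti₀ (by norm_num) (by nlinarith)
  unfold bb
  linarith

lemma aa_lt_bb (n : ℕ) : aa n < bb n := by
  unfold aa bb
  have := Real.exp_pos (-(n : ℝ))
  linarith

lemma II_subset {n : ℕ} (hn : 4 ≤ n) : II n ⊆ Set.Ioc (0 : ℝ) 1 := by
  intro x hx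
  obtain ⟨h1, h2⟩ := hx
  exact ⟨lt_of_lt_of_le (aa_pos hn) h1, le_trans h2 (bb_le_one hn)⟩

lemma bb_lt_aa {n m : ℕ} (hn : 4 ≤ n) (hnm : n < m) : bb m < aa n := by
  have hp := npos hn
  have hm4 : 4 ≤ m := by omega
  have hpm := npos hm4
  have hcast : (n : ℝ) + 1 ≤ (m : ℝ) := by exact_mod_cast hnm
  have h1 : (m : ℝ)⁻¹ ≤ ((n : ℝ) + 1)⁻¹ := inv_anti₀ (by linarith) hcast
  have h2 : Real.exp (-(m : ℝ)) ≤ Real.exp (-(n : ℝ)) := by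
    apply Real.exp_le_exp.mpr; linarith
  have h3 := expneg_small hn
  have key : ((n : ℝ) + 1)⁻¹ + ((n : ℝ) * ((n : ℝ) + 1))⁻¹ = (n : ℝ)⁻¹ := by
    field_simp
  have h4 : 2 * (2 * (n : ℝ) * ((n : ℝ) + 1))⁻¹ = ((n : ℝ) * ((n : ℝ) + 1))⁻¹ := by
    field_simp
  unfold aa bb
  have h5 : Real.exp (-(m : ℝ)) + Real.exp (-(n : ℝ)) < ((n : ℝ) * ((n : ℝ) + 1))⁻¹ := by
    rw [← h4]; linarith
  linarith

lemma disj {n m : ℕ} (hn : 4 ≤ n) (hm : 4 ≤ m) (hne : n ≠ m) {ε : ℝ}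
    (hε : ε ∈ II n) : ε ∉ II m := by
  intro hε'
  rcases lt_or_gt_of_ne hne with h | h
  · have hlt := bb_lt_aa hn h
    linarith [hε.1, hε'.2]
  · have hlt := bb_lt_aa hm h
    linarith [hε.2, hε'.1]

lemma cc_pos {q : ℝ} {n : ℕ} (hn : 4 ≤ n) : 0 < cc q n := by
  have hp := npos hn
  unfold cc
  positivity

lemma cc_rpow {q t : ℝ} {n : ℕ} (hq : q ≠ 0) (hn : 4 ≤ n) :
    |cc q n| ^ t = ((n : ℝ) ^ 2)⁻¹ ^ t * Real.exp ((n : ℝ) / q * t) := by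
  have hp := npos hn
  rw [abs_of_pos (cc_pos hn)]
  unfold cc
  rw [Real.mul_rpow (by positivity) (Real.exp_pos _).le, ← Real.exp_mul]

lemma cc_rpow_q {q : ℝ} {n : ℕ} (hq : 0 < q) (hn : 4 ≤ n) :
    |cc q n| ^ q = ((n : ℝ) ^ 2)⁻¹ ^ q * Real.exp (n : ℝ) := by
  rw [cc_rpow hq.ne' hn, div_mul_cancel₀ _ hq.ne']

lemma cc_rpow_2q {q : ℝ} {n : ℕ} (hq : 0 < q) (hn : 4 ≤ n) :
    |cc q n| ^ (2 * q) = ((n : ℝ) ^ 2)⁻¹ ^ (2 * q) * Real.exp (2 * (n : ℝ)) := by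
  rw [cc_rpow hq.ne' hn]
  congr 1
  congr 1
  field_simp

lemma vol_II (n : ℕ) : (volume (II n)).toReal = 2 * Real.exp (-(n : ℝ)) := by
  unfold II
  rw [Real.volume_Icc, show bb n - aa n = 2 * Real.exp (-(n : ℝ)) by unfold aa bb; ring,
    ENNReal.toReal_ofReal (by positivity)]

noncomputable def FF (q : ℝ) : ℝ → ℝ := fun ε =>
  (∑' n : ℕ, (II (n + 4)).indicator (fun _ => ENNReal.ofReal (cc q (n + 4))) ε).toReal

lemma FF_meas (q : ℝ) : Measurable (FF q) := by
  apply Measurable.ennreal_toReal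
  exact Measurable.ennreal_tsum fun n => measurable_const.indicator measurableSet_Icc

lemma FF_eq_on {q : ℝ} {n : ℕ} (hn : 4 ≤ n) {ε : ℝ} (hε : ε ∈ II n) :
    FF q ε = cc q n := by
  unfold FF
  have hc : n - 4 + 4 = n := Nat.sub_add_cancel hn
  rw [tsum_eq_single (n - 4) ?_]
  · rw [hc, Set.indicator_of_mem hε, ENNReal.toReal_ofReal (cc_pos hn).le]
  · intro k hk
    apply Set.indicator_of_notMem
    exact disj hn (by omega) (by omega) hε

lemma FF_eq_zero {q : ℝ} {ε : ℝ} (h : ∀ n, 4 ≤ n → ε ∉ II n) : FF q ε = 0 := by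
  unfold FF
  have h0 : (∑' n : ℕ, (II (n + 4)).indicator
      (fun _ => ENNReal.ofReal (cc q (n + 4))) ε) = 0 := by
    convert tsum_zero with n
    exact Set.indicator_of_notMem (h (n + 4) (by omega)) _
  rw [h0, ENNReal.toReal_zero]

end ModerateAux

open ModerateAux

set_option maxHeartbeats 2000000 in
/-- For the net `f_ε = n^{−2} e^{n/q}` on
`[1/n − e^{−n}, 1/n + e^{−n}]` (`n ≥ 4`) and `0` elsewhere: `(f_ε)` is
`L^q`-moderate, but its square fails `L^q`-moderateness: for every `s ∈ ℝ`,
`∫₀¹ ε^{qs} |f_ε|^{2q} dε/ε = ∞`. Hence `L^q`-moderate nets are not closed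
under pointwise multiplication. -/
theorem moderate_nets_not_closed_under_multiplication
    (q : ℝ) (hq : 1 ≤ q)
    (f : ℝ → ℝ)
    (hf_on : ∀ n : ℕ, 4 ≤ n →
      ∀ ε ∈ Set.Icc ((n : ℝ)⁻¹ - Real.exp (-(n : ℝ))) ((n : ℝ)⁻¹ + Real.exp (-(n : ℝ))),
        f ε = ((n : ℝ) ^ 2)⁻¹ * Real.exp ((n : ℝ) / q))
    (hf_off : ∀ ε : ℝ,
      (∀ n : ℕ, 4 ≤ n →
        ε ∉ Set.Icc ((n : ℝ)⁻¹ - Real.exp (-(n : ℝ))) ((n : ℝ)⁻¹ + Real.exp (-(n : ℝ)))) →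
      f ε = 0) :
    (∃ s : ℝ,
      IntegrableOn (fun ε : ℝ => ε ^ (q * s) * |f ε| ^ q / ε) (Set.Ioc (0 : ℝ) 1)) ∧
    (∀ s : ℝ,
      ¬ IntegrableOn (fun ε : ℝ => ε ^ (q * s) * |f ε| ^ (2 * q) / ε)
        (Set.Ioc (0 : ℝ) 1)) := by
  have hq0 : 0 < q := lt_of_lt_of_le one_pos hq
  have hf_on' : ∀ n : ℕ, 4 ≤ n → ∀ ε ∈ II n, f ε = cc q n := by
    intro n hn ε hε
    exact hf_on n hn ε hε
  have hf_off' : ∀ ε : ℝ, (∀ n : ℕ, 4 ≤ n → ε ∉ II n) → f ε = 0 := by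
    intro ε h
    exact hf_off ε h
  constructor
  · -- Part 1 : moderateness of f with s = 2/q
    refine ⟨2 / q, ?_⟩
    have hqs : q * (2 / q) = 2 := by field_simp
    simp only [hqs]
    have hfF : ∀ ε ∈ Set.Ioc (0 : ℝ) 1, f ε = FF q ε := by
      intro ε hε
      by_cases h : ∃ n, 4 ≤ n ∧ ε ∈ II n
      · obtain ⟨n, hn, hmem⟩ := h
        rw [hf_on' n hn ε hmem, FF_eq_on hn hmem]
      · rw [hf_off' ε (fun n hn hmem => h ⟨n, hn, hmem⟩),
          FF_eq_zero (fun n hn hmem => h ⟨n, hn, hmem⟩)]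
    constructor
    · -- a.e. strong measurability
      have hg'c : Measurable fun ε : ℝ => ε ^ (2 : ℝ) * |FF q ε| ^ q / ε := by
        have h1 : Continuous fun x : ℝ => x ^ (2 : ℝ) :=
          Real.continuous_rpow_const (by norm_num)
        have h2 : Continuous fun x : ℝ => x ^ q :=
          Real.continuous_rpow_const (by linarith)
        exact ((h1.measurable).mul
          ((h2.measurable).comp ((FF_meas q).abs))).div measurable_id
      refine (hg'c.aestronglyMeasurable).congr ?_
      filter_upwards [ae_restrict_mem measurableSet_Ioc] with ε hε
      rw [hfF ε hε]
    · -- finite integral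
      rw [hasFiniteIntegral_def]
      have hbound : ∀ ε ∈ Set.Ioc (0 : ℝ) 1,
          (‖ε ^ (2 : ℝ) * |f ε| ^ q / ε‖₊ : ℝ≥0∞) ≤
          ∑' n : ℕ, (II (n + 4)).indicator
            (fun _ => ENNReal.ofReal (KK q (n + 4))) ε := by
        intro ε hε
        by_cases h : ∃ n, 4 ≤ n ∧ ε ∈ II n
        · obtain ⟨n, hn, hmem⟩ := h
          have hεpos : 0 < ε := hε.1
          have hval : ε ^ (2 : ℝ) * |f ε| ^ q / ε = ε * KK q n := by
            rw [hf_on' n hn ε hmem, cc_rpow_q hq0 hn, Real.rpow_two]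
            unfold KK
            field_simp
          rw [hval]
          have hKnn : 0 ≤ KK q n := by
            unfold KK
            positivity
          have h1 : (‖ε * KK q n‖₊ : ℝ≥0∞) = ENNReal.ofReal (ε * KK q n) :=
            Real.enorm_eq_ofReal (by positivity)
          rw [h1]
          calc ENNReal.ofReal (ε * KK q n) ≤ ENNReal.ofReal (KK q n) := by
                apply ENNReal.ofReal_le_ofReal
                nlinarith [hε.2]
          _ ≤ _ := by
                have hc : n - 4 + 4 = n := Nat.sub_add_cancel hn
                calc ENNReal.ofReal (KK q n)
                    = (II (n - 4 + 4)).indicator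
                        (fun _ => ENNReal.ofReal (KK q (n - 4 + 4))) ε := by
                      rw [hc, Set.indicator_of_mem hmem]
                  _ ≤ ∑' k : ℕ, (II (k + 4)).indicator
                        (fun _ => ENNReal.ofReal (KK q (k + 4))) ε :=
                      ENNReal.le_tsum _
        · have hz : f ε = 0 := hf_off' ε (fun n hn hmem => h ⟨n, hn, hmem⟩)
          rw [hz]
          simp [Real.zero_rpow hq0.ne']
      calc ∫⁻ ε in Set.Ioc (0:ℝ) 1, (‖ε ^ (2 : ℝ) * |f ε| ^ q / ε‖₊ : ℝ≥0∞) ∂volume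
          ≤ ∫⁻ ε in Set.Ioc (0:ℝ) 1, (∑' n : ℕ, (II (n + 4)).indicator
              (fun _ => ENNReal.ofReal (KK q (n + 4))) ε) ∂volume := by
            apply setLIntegral_mono
              (Measurable.ennreal_tsum fun n => measurable_const.indicator measurableSet_Icc)
              hbound
        _ ≤ ∫⁻ ε, (∑' n : ℕ, (II (n + 4)).indicator
              (fun _ => ENNReal.ofReal (KK q (n + 4))) ε) ∂volume :=
            setLIntegral_le_lintegral _ _
        _ = ∑' n : ℕ, ENNReal.ofReal (KK q (n + 4)) * volume (II (n + 4)) := by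
            rw [lintegral_tsum fun n =>
              (measurable_const.indicator
                (show MeasurableSet (II (n + 4)) from measurableSet_Icc)).aemeasurable]
            congr 1
            funext n
            exact lintegral_indicator_const measurableSet_Icc _
        _ ≤ ∑' n : ℕ, ENNReal.ofReal (2 * (((n : ℝ) + 4) ^ 2)⁻¹) := by
            apply ENNReal.tsum_le_tsum
            intro n
            have hn4 : 4 ≤ n + 4 := by omega
            have hp := npos hn4
            unfold II
            rw [Real.volume_Icc,
              show bb (n+4) - aa (n+4) = 2 * Real.exp (-((n+4 : ℕ) : ℝ)) by unfold aa bb; ring,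
              ← ENNReal.ofReal_mul (by unfold KK; positivity)]
            apply ENNReal.ofReal_le_ofReal
            have hprod : Real.exp (((n+4:ℕ)) : ℝ) * (2 * Real.exp (-(((n+4:ℕ)) : ℝ))) = 2 := by
              rw [Real.exp_neg]
              field_simp
            have hKle : ((((n+4:ℕ)) : ℝ) ^ 2)⁻¹ ^ q ≤ ((((n+4:ℕ)) : ℝ) ^ 2)⁻¹ := by
              have h1 : ((((n+4:ℕ)) : ℝ) ^ 2)⁻¹ ≤ 1 := by
                have h4 : (4 : ℝ) ≤ ((n + 4 : ℕ) : ℝ) := by exact_mod_cast hn4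
                rw [inv_le_one_iff₀]
                right
                nlinarith
              calc ((((n+4:ℕ)) : ℝ) ^ 2)⁻¹ ^ q ≤ ((((n+4:ℕ)) : ℝ) ^ 2)⁻¹ ^ (1:ℝ) :=
                    Real.rpow_le_rpow_of_exponent_ge (by positivity) h1 hq
              _ = ((((n+4:ℕ)) : ℝ) ^ 2)⁻¹ := Real.rpow_one _
            have hcast : (((n+4:ℕ)) : ℝ) = (n : ℝ) + 4 := by push_cast; ring
            calc KK q (n+4) * (2 * Real.exp (-(((n+4:ℕ)) : ℝ)))
                = ((((n+4:ℕ)) : ℝ) ^ 2)⁻¹ ^ q *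
                  (Real.exp (((n+4:ℕ)) : ℝ) * (2 * Real.exp (-(((n+4:ℕ)) : ℝ)))) := by
                  unfold KK; ring
              _ = 2 * ((((n+4:ℕ)) : ℝ) ^ 2)⁻¹ ^ q := by rw [hprod]; ring
              _ ≤ 2 * ((((n+4:ℕ)) : ℝ) ^ 2)⁻¹ := by linarith
              _ = 2 * (((n : ℝ) + 4) ^ 2)⁻¹ := by rw [hcast]
        _ = ENNReal.ofReal (∑' n : ℕ, 2 * (((n : ℝ) + 4) ^ 2)⁻¹) := by
            have h1 : Summable (fun n : ℕ => ((n : ℝ) ^ 2)⁻¹) := by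
              simpa [one_div] using Real.summable_one_div_nat_pow.mpr (le_refl 2)
            have h2 : Summable (fun n : ℕ => ((((n+4:ℕ)) : ℝ) ^ 2)⁻¹) :=
              (summable_nat_add_iff 4).mpr h1
            have h3 : Summable (fun n : ℕ => (((n : ℝ) + 4) ^ 2)⁻¹) := by
              convert h2 using 2 with n
              push_cast
              ring
            exact (ENNReal.ofReal_tsum_of_nonneg (fun n => by positivity)
              (h3.mul_left 2)).symm
        _ < ⊤ := ENNReal.ofReal_lt_top
  · -- Part 2 : non-moderateness of f²
    intro s hint
    set g : ℝ → ℝ := fun ε : ℝ => ε ^ (q * s) * |f ε| ^ (2 * q) / ε with hg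
    set T : ℝ := max (q * s - 1) 0 with hT
    set r : ℝ := T + 4 * q with hr
    set M : ℝ := ∫ ε in Set.Ioc (0 : ℝ) 1, g ε with hM
    -- choose a large m
    have htend : Filter.Tendsto (fun x : ℝ => Real.exp x / x ^ r / 2 ^ r)
        Filter.atTop Filter.atTop :=
      (tendsto_exp_div_rpow_atTop r).atTop_div_const (by positivity)
    have hev := ((htend.comp tendsto_natCast_atTop_atTop).eventually_gt_atTop M).and
      (Filter.eventually_ge_atTop 4)
    obtain ⟨m, hmM, hm4⟩ := hev.exists
    simp only [Function.comp] at hmM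
    have hp := npos hm4
    have h2m : (0 : ℝ) < 2 * (m : ℝ) := by linarith
    -- the constant lower bound on II m
    set D : ℝ := ((m : ℝ) ^ 2)⁻¹ ^ (2 * q) * Real.exp (2 * (m : ℝ)) with hD
    set C : ℝ := aa m ^ T * D with hC
    have hDnn : 0 ≤ D := by rw [hD]; positivity
    have hTnn : 0 ≤ T := le_max_right _ _
    have hpt : ∀ ε ∈ II m, C ≤ g ε := by
      intro ε hε
      have hεa : aa m ≤ ε := hε.1
      have hεpos : 0 < ε := lt_of_lt_of_le (aa_pos hm4) hεa
      have hε1 : ε ≤ 1 := le_trans hε.2 (bb_le_one hm4)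
      have hval : g ε = ε ^ (q * s - 1) * D := by
        rw [hg]
        simp only
        rw [hf_on' m hm4 ε hε, cc_rpow_2q hq0 hm4, Real.rpow_sub_one hεpos.ne', hD]
        ring
      rw [hval, hC]
      apply mul_le_mul_of_nonneg_right _ hDnn
      calc aa m ^ T ≤ ε ^ T :=
            Real.rpow_le_rpow (aa_pos hm4).le hεa hTnn
        _ ≤ ε ^ (q * s - 1) :=
            Real.rpow_le_rpow_of_exponent_ge hεpos hε1 (le_max_left _ _)
      done
    -- integral bounds
    have hIsub := II_subset hm4
    have hint_II : IntegrableOn g (II m) volume := hint.mono_set hIsub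
    have hstep2 : C * (2 * Real.exp (-(m : ℝ))) ≤ ∫ ε in II m, g ε := by
      have := setIntegral_ge_of_const_le (μ := volume) (s := II m) (f := g)
        measurableSet_Icc (by rw [II, Real.volume_Icc]; exact ENNReal.ofReal_ne_top)
        hpt hint_II
      have hv : volume.real (II m) = 2 * Real.exp (-(m : ℝ)) := vol_II m
      rw [hv, smul_eq_mul] at this
      linarith
    have hstep1 : (∫ ε in II m, g ε) ≤ M := by
      rw [hM]
      apply setIntegral_mono_set hint ?_ (hIsub.eventuallyLE)
      filter_upwards [ae_restrict_mem measurableSet_Ioc] with ε hε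
      rw [hg]
      simp only
      exact div_nonneg (mul_nonneg (Real.rpow_nonneg hε.1.le _)
        (Real.rpow_nonneg (abs_nonneg _) _)) hε.1.le
    -- lower bound for C * (2 e^{-m})
    have hstep3 : Real.exp (m : ℝ) / (m : ℝ) ^ r / 2 ^ r ≤ C * (2 * Real.exp (-(m : ℝ))) := by
      have hA : ((2 * (m : ℝ))⁻¹) ^ T ≤ aa m ^ T :=
        Real.rpow_le_rpow (by positivity) (aa_ge hm4) hTnn
      have hB : ((2 * (m : ℝ))⁻¹) ^ (4 * q) ≤ ((m : ℝ) ^ 2)⁻¹ ^ (2 * q) := by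
        have h1 : ((2 * (m : ℝ))⁻¹) ^ (4 * q) = (((2 * (m : ℝ))⁻¹ ^ (2 : ℝ)) : ℝ) ^ (2 * q) := by
          rw [← Real.rpow_mul (by positivity)]
          ring_nf
        rw [h1]
        apply Real.rpow_le_rpow (by positivity) _ (by linarith)
        rw [Real.rpow_two, inv_pow]
        exact inv_anti₀ (by positivity) (by nlinarith)
      have hmul : ((2 * (m : ℝ))⁻¹) ^ r ≤ aa m ^ T * ((m : ℝ) ^ 2)⁻¹ ^ (2 * q) := by
        have h2 : ((2 * (m : ℝ))⁻¹) ^ r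
            = ((2 * (m : ℝ))⁻¹) ^ T * ((2 * (m : ℝ))⁻¹) ^ (4 * q) := by
          rw [hr, Real.rpow_add (by positivity)]
        rw [h2]
        exact mul_le_mul hA hB (Real.rpow_nonneg (by positivity) _)
          (Real.rpow_nonneg (aa_pos hm4).le _)
      have hL : Real.exp (m : ℝ) / (m : ℝ) ^ r / 2 ^ r
          = ((2 * (m : ℝ))⁻¹) ^ r * Real.exp (m : ℝ) := by
        rw [Real.inv_rpow (by positivity), Real.mul_rpow (by norm_num) hp.le]
        have hmr : (0:ℝ) < (m : ℝ) ^ r := Real.rpow_pos_of_pos hp r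
        have h2r : (0:ℝ) < (2:ℝ) ^ r := Real.rpow_pos_of_pos (by norm_num) r
        field_simp
      have hexp : Real.exp (2 * (m : ℝ)) * Real.exp (-(m : ℝ)) = Real.exp (m : ℝ) := by
        rw [← Real.exp_add]; congr 1; ring
      have hC2 : C * (2 * Real.exp (-(m : ℝ)))
          = aa m ^ T * ((m : ℝ) ^ 2)⁻¹ ^ (2 * q) * (2 * Real.exp (m : ℝ)) := by
        rw [hC, hD, show aa m ^ T * (((m : ℝ) ^ 2)⁻¹ ^ (2 * q) * Real.exp (2 * (m : ℝ)))
            * (2 * Real.exp (-(m : ℝ)))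
            = aa m ^ T * ((m : ℝ) ^ 2)⁻¹ ^ (2 * q) * 2
              * (Real.exp (2 * (m : ℝ)) * Real.exp (-(m : ℝ))) from by ring, hexp]
        ring
      rw [hC2, hL]
      have hexpm := Real.exp_pos (m : ℝ)
      have hXnn : (0:ℝ) ≤ ((2 * (m : ℝ))⁻¹) ^ r := Real.rpow_nonneg (by positivity) _
      nlinarith [mul_le_mul_of_nonneg_right hmul hexpm.le]
    have : M < M := lt_of_lt_of_le hmM
      (le_trans hstep3 (le_trans hstep2 hstep1))
    exact absurd this (lt_irrefl M)
end
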